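/- Let P be a d-dimensional perfect prismatoid in ℝ^d whose vertices all lie in ℤ^d, described by inequalities c_i ≤ ⟨a_i, x⟩ ≤ b_i, i = 1, ..., N, with c_i < b_i and with every vertex v of P satisfying ⟨a_i, v⟩ ∈ {b_i, c_i} for each i, and let Q(x) = Σ_{i=1}^{N} (⟨a_i, x⟩ − b_i)(⟨a_i, x⟩ − c_i). Then the set E = {x ∈ ℝ^d : Q(x) = 0} is an ellipsoid (the zero set of a quadratic function with positive definite quadratic part) that passes through every vertex of P, and the open region {x : Q(x) < 0} enclosed by E contains no point of the lattice Λ(P) of integer affine combinations of the vertices of P. -/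

import Mathlib

open scoped RealInnerProductSpace

/-- A polytope is the convex hull of a finite set of points. -/
def IsPolytope {d : ℕ} (P : Set (EuclideanSpace ℝ (Fin d))) : Prop :=
  ∃ S : Finset (EuclideanSpace ℝ (Fin d)),
    P = convexHull ℝ (S : Set (EuclideanSpace ℝ (Fin d)))

/-- A facet of a `d`-dimensional polytope is a `(d-1)`-dimensional exposed face. -/
def IsFacet {d : ℕ} (P F : Set (EuclideanSpace ℝ (Fin d))) : Prop :=
  IsExposed ℝ P F ∧ Module.finrank ℝ (vectorSpan ℝ F) = d - 1

/-- A `d`-dimensional polytope `P` in `ℝ^d` is a perfect prismatoid if for every facet `F`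
there is a (nonempty exposed) face `F'` parallel to `F` (i.e. `lin F' ⊆ lin F`) such that
`P = conv (F ∪ F')`. -/
def IsPerfectPrismatoid {d : ℕ} (P : Set (EuclideanSpace ℝ (Fin d))) : Prop :=
  IsPolytope P ∧ affineSpan ℝ P = ⊤ ∧
  ∀ F : Set (EuclideanSpace ℝ (Fin d)), IsFacet P F →
    ∃ F' : Set (EuclideanSpace ℝ (Fin d)), IsExposed ℝ P F' ∧ F'.Nonempty ∧
      vectorSpan ℝ F' ≤ vectorSpan ℝ F ∧ P = convexHull ℝ (F ∪ F')

/-- The set of integer affine combinations of the points `v 0, ..., v (k-1)`: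
integer linear combinations whose coefficients sum to `1`. -/
def intAffineCombos {d k : ℕ} (v : Fin k → EuclideanSpace ℝ (Fin d)) :
    Set (EuclideanSpace ℝ (Fin d)) :=
  {u | ∃ n : Fin k → ℤ, (∑ j, n j) = 1 ∧ u = ∑ j, (n j : ℝ) • v j}

/-- In the setting of the Proposition (perfect prismatoid with integer
vertices, described by `c i ≤ ⟪a i, x⟫ ≤ b i` with vertex values in `{b i, c i}`), the set
`E = {x | Q x = 0}` with `Q x = ∑ i, (⟪a i, x⟫ - b i) * (⟪a i, x⟫ - c i)` is an ellipsoid: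
the quadratic part `x ↦ ∑ i, ⟪a i, x⟫ ^ 2` of `Q` is positive definite, `E` passes through
every vertex of `P`, and the open region `{x | Q x < 0}` contains no point of the lattice
`Λ(P)` of integer affine combinations of the vertices of `P`. -/
theorem empty_ellipsoid_through_vertices {d N k : ℕ}
    (P : Set (EuclideanSpace ℝ (Fin d))) (hP : IsPerfectPrismatoid P)
    (v : Fin k → EuclideanSpace ℝ (Fin d))
    (hvint : ∀ j i, ∃ m : ℤ, v j i = (m : ℝ))
    (hvP : Set.range v = Set.extremePoints ℝ P)
    (a : Fin N → EuclideanSpace ℝ (Fin d)) (b c : Fin N → ℝ)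
    (hcb : ∀ i, c i < b i)
    (hdesc : P = {x | ∀ i, c i ≤ ⟪a i, x⟫ ∧ ⟪a i, x⟫ ≤ b i})
    (hvert : ∀ w ∈ Set.extremePoints ℝ P, ∀ i, ⟪a i, w⟫ = b i ∨ ⟪a i, w⟫ = c i) :
    (∀ x : EuclideanSpace ℝ (Fin d), x ≠ 0 → 0 < ∑ i, ⟪a i, x⟫ ^ 2) ∧
    (∀ w ∈ Set.extremePoints ℝ P,
      (∑ i, (⟪a i, w⟫ - b i) * (⟪a i, w⟫ - c i)) = 0) ∧
    (∀ u ∈ intAffineCombos v,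
      ¬ (∑ i, (⟪a i, u⟫ - b i) * (⟪a i, u⟫ - c i)) < 0) := by
  obtain ⟨⟨S, hS⟩, hspan, _⟩ := hP
  have hPne : P.Nonempty := by
    by_contra hne
    rw [Set.not_nonempty_iff_eq_empty] at hne
    rw [hne] at hspan
    rw [AffineSubspace.span_empty] at hspan
    have : (0 : EuclideanSpace ℝ (Fin d)) ∈ (⊥ : AffineSubspace ℝ _) :=
      hspan ▸ AffineSubspace.mem_top ℝ _ 0
    exact absurd this (by apply AffineSubspace.notMem_bot)
  refine ⟨?_, ?_, ?_⟩
  · intro x hx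
    by_contra hle
    push_neg at hle
    have hsum0 : ∑ i, ⟪a i, x⟫ ^ 2 = 0 :=
      le_antisymm hle (Finset.sum_nonneg fun i _ => sq_nonneg _)
    have h0 : ∀ i, ⟪a i, x⟫ = 0 := by
      intro i
      have := (Finset.sum_eq_zero_iff_of_nonneg (fun i _ => sq_nonneg _)).mp hsum0 i
        (Finset.mem_univ i)
      exact pow_eq_zero_iff (by norm_num) |>.mp this
    obtain ⟨p, hp⟩ := hPne
    have hmem : ∀ t : ℝ, p + t • x ∈ P := by
      intro t
      rw [hdesc] at hp ⊢
      intro i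
      have hinner : ⟪a i, p + t • x⟫ = ⟪a i, p⟫ := by
        rw [inner_add_right, real_inner_smul_right, h0, mul_zero, add_zero]
      rw [hinner]; exact hp i
    have hbdd : Bornology.IsBounded P := by
      rw [hS]
      exact isBounded_convexHull.mpr (Set.Finite.isBounded S.finite_toSet)
    obtain ⟨R, hR⟩ := hbdd.exists_norm_le
    have hxn : 0 < ‖x‖ := norm_pos_iff.mpr hx
    set t : ℝ := (R + ‖p‖ + 1) / ‖x‖ with ht
    have hRle := hR _ (hmem t)
    have hRp : ‖p‖ ≤ R := hR p hp
    have h1 : ‖t • x‖ ≤ ‖p + t • x‖ + ‖p‖ := by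
      have := norm_sub_le (p + t • x) p
      simpa using this
    have h2 : ‖t • x‖ = R + ‖p‖ + 1 := by
      rw [norm_smul, Real.norm_eq_abs, ht, abs_div, abs_of_nonneg (by linarith [norm_nonneg p]),
        abs_of_pos hxn, div_mul_cancel₀ _ (ne_of_gt hxn)]
    linarith
  · intro w hw
    refine Finset.sum_eq_zero fun i _ => ?_
    rcases hvert w hw i with h | h <;> rw [h] <;> ring
  · rintro u ⟨n, hn1, rfl⟩ hlt
    have key : ∀ i ∈ Finset.univ, (0:ℝ) ≤
        (⟪a i, ∑ j, (n j:ℝ) • v j⟫ - b i) * (⟪a i, ∑ j, (n j:ℝ) • v j⟫ - c i) := by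
      intro i _
      classical
      set e : Fin k → ℝ := fun j => if ⟪a i, v j⟫ = b i then 1 else 0 with he
      set s : ℝ := ∑ j, (n j : ℝ) * e j with hs
      have hsint : ∃ m : ℤ, s = (m : ℝ) := by
        refine ⟨∑ j, n j * (if ⟪a i, v j⟫ = b i then 1 else 0), ?_⟩
        rw [hs]
        push_cast
        rfl
      have hval : ⟪a i, ∑ j, (n j:ℝ) • v j⟫ = s * b i + (1 - s) * c i := by
        rw [inner_sum]
        have hterm : ∀ j ∈ Finset.univ, ⟪a i, (n j:ℝ) • v j⟫
            = (n j : ℝ) * e j * b i + ((n j : ℝ) * c i - (n j : ℝ) * e j * c i) := by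
          intro j _
          rw [real_inner_smul_right]
          have hvj : v j ∈ Set.extremePoints ℝ P := hvP ▸ Set.mem_range_self j
          simp only [he]
          rcases hvert (v j) hvj i with h | h
          · rw [if_pos h, h]; ring
          · by_cases hbc : ⟪a i, v j⟫ = b i
            · rw [if_pos hbc, hbc, ← hbc, h]; ring
            · rw [if_neg hbc, h]; ring
        rw [Finset.sum_congr rfl hterm, Finset.sum_add_distrib, Finset.sum_sub_distrib,
          ← Finset.sum_mul, ← Finset.sum_mul, ← Finset.sum_mul, ← hs]
        have hn1' : (∑ j, (n j:ℝ)) = 1 := by exact_mod_cast hn1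
        rw [hn1']
        ring
      obtain ⟨m, hm⟩ := hsint
      have hmm : (0:ℝ) ≤ (m:ℝ) * ((m:ℝ) - 1) := by
        have : (0:ℤ) ≤ m * (m - 1) := by
          rcases le_or_gt m 0 with h | h
          · rw [← neg_mul_neg]
            exact mul_nonneg (by omega) (by omega)
          · exact mul_nonneg (by omega) (by omega)
        exact_mod_cast this
      have hid : (⟪a i, ∑ j, (n j:ℝ) • v j⟫ - b i) * (⟪a i, ∑ j, (n j:ℝ) • v j⟫ - c i)
          = (m:ℝ) * ((m:ℝ) - 1) * (b i - c i) ^ 2 := by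
        rw [hval, hm]; ring
      rw [hid]
      exact mul_nonneg hmm (sq_nonneg _)
    exact absurd hlt (not_lt.mpr (Finset.sum_nonneg key))
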